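/- If a labeled graph G = (V, E) with V ⊂ ℕ has an induced path x₀ x₁ … x_s of length s ≥ 3 such that max{x₀, x_s} < min{x₁, …, x_{s−1}} (a 'bad path'), then G is not 12-representable. -/

import Mathlib

/-- A word has no 12-match iff no two consecutive letters form a strictly
increasing pair, i.e. the word is weakly decreasing at each step. -/
def NoMatch12 (w : List ℕ) : Prop := w.Chain' (fun a b => b ≤ a)

/-- `w` 12-represents the labeled graph with vertex set `V ⊂ ℕ` and edge relation
`E`: every vertex occurs in `w`, all letters of `w` are vertices, and for all
distinct vertices `x, y`: `xy` is an edge iff the subsequence of `w` consisting of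
occurrences of `x` and `y` has no 12-match. -/
def Rep12 (V : Finset ℕ) (E : ℕ → ℕ → Prop) (w : List ℕ) : Prop :=
  (∀ v ∈ V, v ∈ w) ∧ (∀ a ∈ w, a ∈ V) ∧
    ∀ x ∈ V, ∀ y ∈ V, x ≠ y →
      (E x y ↔ NoMatch12 (w.filter (fun a => a = x ∨ a = y)))

instance : IsTrans ℕ (fun a b => b ≤ a) := ⟨fun _ _ _ h1 h2 => le_trans h2 h1⟩

/-- From two 2-element sublists we can always cross-combine one way. -/
lemma cross {a b c d : ℕ} : ∀ w : List ℕ, List.Sublist [a,b] w → List.Sublist [c,d] w →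
    List.Sublist [a,d] w ∨ List.Sublist [c,b] w := by
  intro w
  induction w with
  | nil => intro h; simp at h
  | cons z t ih =>
    intro hab hcd
    cases hab with
    | cons _ hab' =>
      cases hcd with
      | cons _ hcd' =>
        rcases ih hab' hcd' with h | h
        · exact Or.inl (h.cons z)
        · exact Or.inr (h.cons z)
      | cons_cons _ hcd' =>
        -- c = z, List.Sublist [d] t ; b ∈ t from hab'
        have hb : List.Sublist [b] t := (List.sublist_cons_self a [b]).trans hab'
        exact Or.inr (hb.cons₂ _)
    | cons_cons _ hab' =>
      -- a = z, List.Sublist [b] t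
      have hd : List.Sublist [d] t := by
        cases hcd with
        | cons _ h => exact (List.sublist_cons_self c [d]).trans h
        | cons_cons _ h => exact h
      exact Or.inl (hd.cons₂ _)

lemma edge_lemma (w : List ℕ) (p : ℕ → Bool) (u v : ℕ) (huv : u < v)
    (hpu : p u = true) (hpv : p v = true)
    (h : (w.filter p).Chain' (fun a b => b ≤ a)) : ¬ List.Sublist [u, v] w := by
  intro hsub
  have h2 : List.Sublist [u, v] (w.filter p) := by
    have := List.Sublist.filter p hsub
    simpa [hpu, hpv] using this
  have hp : (w.filter p).Pairwise (fun a b => b ≤ a) :=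
    List.isChain_iff_pairwise.mp h
  have := List.pairwise_iff_forall_sublist.mp hp h2
  omega

lemma nonedge_lemma (w : List ℕ) (p : ℕ → Bool) (u v : ℕ) (huv : u < v)
    (hall : ∀ a, p a = true → a = u ∨ a = v)
    (h : ¬ (w.filter p).Chain' (fun a b => b ≤ a)) : List.Sublist [u, v] w := by
  have hnp : ¬ (w.filter p).Pairwise (fun a b => b ≤ a) :=
    fun hp => h (List.isChain_iff_pairwise.mpr hp)
  rw [List.pairwise_iff_forall_sublist] at hnp
  push_neg at hnp
  obtain ⟨a, b, hab, hba⟩ := hnp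
  have ha : a ∈ w.filter p := hab.subset (by simp)
  have hb : b ∈ w.filter p := hab.subset (by simp)
  have ha' := hall a (List.of_mem_filter ha)
  have hb' := hall b (List.of_mem_filter hb)
  have hau : a = u := by rcases ha' with h|h <;> rcases hb' with h'|h' <;> omega
  have hbv : b = v := by rcases ha' with h|h <;> rcases hb' with h'|h' <;> omega
  subst hau; subst hbv
  exact hab.trans w.filter_sublist


/-- a labeled graph with a "bad path": an induced path
`x₀ x₁ … x_s`, `s ≥ 3`, with `max {x₀, x_s} < min {x₁, …, x_{s−1}}`, is not
12-representable. -/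
theorem stmt_9 (V : Finset ℕ) (E : ℕ → ℕ → Prop) (hsym : Symmetric E)
    (s : ℕ) (hs : 3 ≤ s) (x : ℕ → ℕ)
    (hmem : ∀ t ≤ s, x t ∈ V)
    (hinj : ∀ a ≤ s, ∀ b ≤ s, x a = x b → a = b)
    (hedge : ∀ t, t < s → E (x t) (x (t + 1)))
    (hnonedge : ∀ a, ∀ b ≤ s, a + 2 ≤ b → ¬ E (x a) (x b))
    (hbad : ∀ t, 0 < t → t < s → x 0 < x t ∧ x s < x t) :
    ¬ ∃ w, Rep12 V E w := by
  rintro ⟨w, hw1, hw2, hiff⟩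
  set a0 := x 0 with ha0
  set a1 := x 1 with ha1
  set b1 := x (s-1) with hb1
  set b0 := x s with hb0
  have hbad1 := hbad 1 (by omega) (by omega)
  have hbads := hbad (s-1) (by omega) (by omega)
  have ne01 : a0 ≠ a1 := fun h => by have := hinj 0 (by omega) 1 (by omega) h; omega
  have ne_last : b1 ≠ b0 := fun h => by have := hinj (s-1) (by omega) s le_rfl h; omega
  have ne0b : a0 ≠ b1 := fun h => by have := hinj 0 (by omega) (s-1) (by omega) h; omega
  have ne1b : a1 ≠ b0 := fun h => by have := hinj 1 (by omega) s le_rfl h; omega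
  have m0 : a0 ∈ V := hmem 0 (by omega)
  have m1 : a1 ∈ V := hmem 1 (by omega)
  have mb1 : b1 ∈ V := hmem (s-1) (by omega)
  have mb0 : b0 ∈ V := hmem s le_rfl
  have e01 : E a0 a1 := hedge 0 (by omega)
  have elast : E b1 b0 := by
    have := hedge (s-1) (by omega)
    rwa [show s-1+1 = s from by omega] at this
  have n0 : ¬ E a0 b1 := hnonedge 0 (s-1) (by omega) (by omega)
  have n1 : ¬ E a1 b0 := hnonedge 1 s le_rfl (by omega)
  have m01 : NoMatch12 (w.filter (fun a => a = a0 ∨ a = a1)) :=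
    (hiff a0 m0 a1 m1 ne01).mp e01
  have mlast : NoMatch12 (w.filter (fun a => a = b1 ∨ a = b0)) :=
    (hiff b1 mb1 b0 mb0 ne_last).mp elast
  have nm0 : ¬ NoMatch12 (w.filter (fun a => a = a0 ∨ a = b1)) :=
    fun h => n0 ((hiff a0 m0 b1 mb1 ne0b).mpr h)
  have nm1 : ¬ NoMatch12 (w.filter (fun a => a = a1 ∨ a = b0)) :=
    fun h => n1 ((hiff a1 m1 b0 mb0 ne1b).mpr h)
  have s1 : List.Sublist [a0, b1] w :=
    nonedge_lemma w _ a0 b1 hbads.1 (by intro a h; simpa using of_decide_eq_true h) nm0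
  have s2 : List.Sublist [b0, a1] w :=
    nonedge_lemma w _ b0 a1 hbad1.2 (by intro a h; have := of_decide_eq_true h; tauto) nm1
  have ns1 : ¬ List.Sublist [a0, a1] w :=
    edge_lemma w _ a0 a1 hbad1.1 (by simp) (by simp) m01
  have ns2 : ¬ List.Sublist [b0, b1] w :=
    edge_lemma w _ b0 b1 hbads.2 (by simp) (by simp) mlast
  rcases cross w s2 s1 with h | h
  · exact ns2 h
  · exact ns1 h
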